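/- Let {T^k}_{k∈ℕ} be a sequence of independent Bernoulli random variables with ℙ(T^k = 1) ≥ 1 − δ ≥ 1/2 for all k. Let S^n = ∑_{k=0}^{n−1} T^k and let K be a stopping time for {S^n} with 𝔼[K] < ∞. Assume there is a constant B ≥ 0 with S^K ≤ B almost surely. Then for any γ ∈ (0, 1), ℙ( K ≥ ((2 + γ(1 − γ²)) / ((1 − γ)(1 − δ))) · B ) ≤ e^{−γ²·𝔼[K]}. -/

import Mathlib

open MeasureTheory ProbabilityTheory

set_option maxHeartbeats 1600000 in
/-- High-probability bound on a stopping time whose partial sums are bounded. -/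
theorem stmt_11 {Ω : Type*} [MeasurableSpace Ω] (μ : Measure Ω) [IsProbabilityMeasure μ]
    (T : ℕ → Ω → ℝ) (hmeas : ∀ k, Measurable (T k))
    (hindep : iIndepFun T μ)
    (hBer : ∀ k ω, T k ω ∈ ({0, 1} : Set ℝ))
    (δ : ℝ) (hδ : 1 - δ ≥ 1 / 2)
    (hp : ∀ k, (μ {ω | T k ω = 1}).toReal ≥ 1 - δ)
    (S : ℕ → Ω → ℝ) (hS : ∀ n ω, S n ω = ∑ k ∈ Finset.range n, T k ω)
    (K : Ω → ℕ) (hKmeas : Measurable K)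
    (hstop : ∀ k n : ℕ, k ≤ n →
      IndepFun (fun ω => Set.indicator {ω' | k < K ω'} (fun _ => (1 : ℝ)) ω) (S n) μ)
    (hKint : Integrable (fun ω => (K ω : ℝ)) μ)
    (B : ℝ) (hB : 0 ≤ B) (hSK : ∀ᵐ ω ∂μ, S (K ω) ω ≤ B)
    (γ : ℝ) (hγ : γ ∈ Set.Ioo (0 : ℝ) 1) :
    (μ {ω | (K ω : ℝ) ≥ ((2 + γ * (1 - γ ^ 2)) / ((1 - γ) * (1 - δ))) * B}).toReal
      ≤ Real.exp (-γ ^ 2 * ∫ ω', (K ω' : ℝ) ∂μ) := by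
  obtain ⟨hγ0, hγ1⟩ := hγ
  have hd : (0 : ℝ) < 1 - δ := lt_of_lt_of_le (by norm_num) hδ
  have hBer' : ∀ k ω, T k ω = 0 ∨ T k ω = 1 := by
    intro k ω
    have h := hBer k ω
    simpa [Set.mem_insert_iff, Set.mem_singleton_iff] using h
  have hT0 : ∀ k ω, 0 ≤ T k ω := by
    intro k ω; rcases hBer' k ω with h | h <;> simp [h]
  have hT1 : ∀ k ω, T k ω ≤ 1 := by
    intro k ω; rcases hBer' k ω with h | h <;> simp [h]
  have hbdd : ∀ (f : Ω → ℝ) (C : ℝ), Measurable f → (∀ ω, |f ω| ≤ C) → Integrable f μ := by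
    intro f C hf h
    exact Integrable.mono' (integrable_const C) hf.aestronglyMeasurable
      (Filter.Eventually.of_forall fun ω => by simpa [Real.norm_eq_abs] using h ω)
  have hSfun : ∀ n, S n = ∑ k ∈ Finset.range n, T k := by
    intro n; funext ω; rw [hS n ω, Finset.sum_apply]
  have hSm : ∀ n, Measurable (S n) := by
    intro n
    have h : S n = fun ω => ∑ k ∈ Finset.range n, T k ω := funext (hS n)
    rw [h]; exact Finset.measurable_sum _ fun k _ => hmeas k
  have hS0 : ∀ n ω, 0 ≤ S n ω := by
    intro n ω; rw [hS n ω]; exact Finset.sum_nonneg fun k _ => hT0 k ω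
  have hSmono : ∀ m n : ℕ, m ≤ n → ∀ ω, S m ω ≤ S n ω := by
    intro m n hmn ω
    rw [hS m ω, hS n ω]
    exact Finset.sum_le_sum_of_subset_of_nonneg (Finset.range_subset_range.mpr hmn)
      fun k _ _ => hT0 k ω
  set g : ℕ → Ω → ℝ := fun k ω => Set.indicator {ω' | k < K ω'} (fun _ => (1 : ℝ)) ω with hg
  have hKset : ∀ k, MeasurableSet {ω | k < K ω} := by
    intro k; exact hKmeas measurableSet_Ioi
  have hg_eq : ∀ k ω, g k ω = if k < K ω then 1 else 0 := by
    intro k ω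
    simp [hg, Set.indicator_apply, Set.mem_setOf_eq]
  have hgm : ∀ k, Measurable (g k) := by
    intro k; exact (measurable_const.indicator (hKset k))
  have hint_g : ∀ k, Integrable (g k) μ := by
    intro k
    refine hbdd _ 1 (hgm k) fun ω => ?_
    rw [hg_eq]; split <;> simp
  have hint_S : ∀ n, Integrable (S n) μ := by
    intro n
    refine hbdd _ n (hSm n) fun ω => ?_
    rw [abs_of_nonneg (hS0 n ω), hS n ω]
    calc ∑ k ∈ Finset.range n, T k ω ≤ ∑ k ∈ Finset.range n, 1 :=
          Finset.sum_le_sum fun k _ => hT1 k ω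
      _ = n := by simp
  have hint_T : ∀ k, Integrable (T k) μ := by
    intro k
    exact hbdd _ 1 (hmeas k) fun ω => by rw [abs_of_nonneg (hT0 k ω)]; exact hT1 k ω
  have hSb : ∀ (n : ℕ) ω, S n ω ≤ (n : ℝ) := by
    intro n ω
    rw [hS n ω]
    calc ∑ k ∈ Finset.range n, T k ω ≤ ∑ k ∈ Finset.range n, 1 :=
          Finset.sum_le_sum fun k _ => hT1 k ω
      _ = n := by simp
  have hgb : ∀ k ω, |g k ω| ≤ 1 := by
    intro k ω; rw [hg_eq]; split <;> simp
  have hint_gS : ∀ k n : ℕ, Integrable (fun ω => g k ω * S n ω) μ := by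
    intro k n
    refine hbdd _ n ((hgm k).mul (hSm n)) fun ω => ?_
    rw [abs_mul]
    calc |g k ω| * |S n ω| ≤ 1 * |S n ω| :=
          mul_le_mul_of_nonneg_right (hgb k ω) (abs_nonneg _)
      _ = |S n ω| := one_mul _
      _ ≤ n := by rw [abs_of_nonneg (hS0 n ω)]; exact hSb n ω
  have hint_gT : ∀ k : ℕ, Integrable (fun ω => g k ω * T k ω) μ := by
    intro k
    refine hbdd _ 1 ((hgm k).mul (hmeas k)) fun ω => ?_
    rw [abs_mul]
    calc |g k ω| * |T k ω| ≤ 1 * 1 := by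
          refine mul_le_mul (hgb k ω) ?_ (abs_nonneg _) zero_le_one
          rw [abs_of_nonneg (hT0 k ω)]; exact hT1 k ω
      _ = 1 := one_mul _
  have hIg : ∀ k, ∫ ω, g k ω ∂μ = (μ {ω | k < K ω}).toReal := by
    intro k
    rw [hg, MeasureTheory.integral_indicator_const (1 : ℝ) (hKset k)]
    simp
    rfl
  have hIT : ∀ k, 1 - δ ≤ ∫ ω, T k ω ∂μ := by
    intro k
    have hset : MeasurableSet {ω | T k ω = 1} := (hmeas k) (measurableSet_singleton 1)
    have heq : (fun ω => T k ω) = fun ω =>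
        Set.indicator {ω' | T k ω' = 1} (fun _ => (1 : ℝ)) ω := by
      funext ω
      rcases hBer' k ω with h | h
      · rw [h, Set.indicator_of_notMem]
        simp only [Set.mem_setOf_eq, h]; norm_num
      · rw [h, Set.indicator_of_mem]; exact h
    have h2 : ∫ ω, T k ω ∂μ = (μ {ω | T k ω = 1}).toReal := by
      rw [heq, MeasureTheory.integral_indicator_const (1 : ℝ) hset]
      simp
      rfl
    rw [h2]; exact hp k
  have hIS : ∀ n, ∫ ω, S n ω ∂μ = ∑ k ∈ Finset.range n, ∫ ω, T k ω ∂μ := by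
    intro n
    rw [show (fun ω => S n ω) = fun ω => ∑ k ∈ Finset.range n, T k ω from funext (hS n)]
    exact integral_finset_sum _ fun k _ => hint_T k
  have hgT : ∀ k, ∫ ω, g k ω * T k ω ∂μ
      = (μ {ω | k < K ω}).toReal * ∫ ω, T k ω ∂μ := by
    intro k
    have h1 : ∫ ω, g k ω * S (k + 1) ω ∂μ
        = (∫ ω, g k ω ∂μ) * ∫ ω, S (k + 1) ω ∂μ :=
      IndepFun.integral_mul_eq_mul_integral (hstop k (k + 1) (by omega)) (hint_g k).1 (hint_S (k + 1)).1
    have h2 : ∫ ω, g k ω * S k ω ∂μ = (∫ ω, g k ω ∂μ) * ∫ ω, S k ω ∂μ :=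
      IndepFun.integral_mul_eq_mul_integral (hstop k k le_rfl) (hint_g k).1 (hint_S k).1
    have h3 : (fun ω => g k ω * T k ω)
        = fun ω => g k ω * S (k + 1) ω - g k ω * S k ω := by
      funext ω
      have : T k ω = S (k + 1) ω - S k ω := by
        rw [hS (k + 1) ω, hS k ω, Finset.sum_range_succ]; ring
      rw [this]; ring
    rw [h3, integral_sub (hint_gS k (k + 1)) (hint_gS k k), h1, h2, hIg k,
      hIS (k + 1), hIS k, Finset.sum_range_succ]
    ring
  have hpartial : ∀ N : ℕ,
      (1 - δ) * ∑ k ∈ Finset.range N, (μ {ω | k < K ω}).toReal ≤ B := by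
    intro N
    have hptw : ∀ᵐ ω ∂μ, ∑ k ∈ Finset.range N, g k ω * T k ω ≤ B := by
      filter_upwards [hSK] with ω hω
      have h1 : ∑ k ∈ Finset.range N, g k ω * T k ω
          = ∑ k ∈ (Finset.range N).filter (fun k => k < K ω), T k ω := by
        rw [Finset.sum_filter]
        refine Finset.sum_congr rfl fun k _ => ?_
        rw [hg_eq]; split <;> simp
      have h2 : (Finset.range N).filter (fun k => k < K ω) ⊆ Finset.range (K ω) := by
        intro k hk
        simp only [Finset.mem_filter, Finset.mem_range] at hk ⊢
        omega
      calc ∑ k ∈ Finset.range N, g k ω * T k ω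
          = ∑ k ∈ (Finset.range N).filter (fun k => k < K ω), T k ω := h1
        _ ≤ ∑ k ∈ Finset.range (K ω), T k ω :=
            Finset.sum_le_sum_of_subset_of_nonneg h2 fun k _ _ => hT0 k ω
        _ = S (K ω) ω := (hS (K ω) ω).symm
        _ ≤ B := hω
    have hIsum : ∫ ω, ∑ k ∈ Finset.range N, g k ω * T k ω ∂μ ≤ B := by
      calc ∫ ω, ∑ k ∈ Finset.range N, g k ω * T k ω ∂μ
          ≤ ∫ _ω, B ∂μ :=
            integral_mono_ae (integrable_finset_sum _ fun k _ => hint_gT k)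
              (integrable_const B) hptw
        _ = B := by simp
    rw [integral_finset_sum _ (fun k _ => hint_gT k)] at hIsum
    calc (1 - δ) * ∑ k ∈ Finset.range N, (μ {ω | k < K ω}).toReal
        = ∑ k ∈ Finset.range N, (1 - δ) * (μ {ω | k < K ω}).toReal := by
          rw [Finset.mul_sum]
      _ ≤ ∑ k ∈ Finset.range N, ∫ ω, g k ω * T k ω ∂μ := by
          refine Finset.sum_le_sum fun k _ => ?_
          rw [hgT k]
          calc (1 - δ) * (μ {ω | k < K ω}).toReal
              ≤ (∫ ω, T k ω ∂μ) * (μ {ω | k < K ω}).toReal :=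
                mul_le_mul_of_nonneg_right (hIT k) ENNReal.toReal_nonneg
            _ = (μ {ω | k < K ω}).toReal * ∫ ω, T k ω ∂μ := mul_comm _ _
      _ ≤ B := hIsum
  have hEK0 : 0 ≤ ∫ ω, (K ω : ℝ) ∂μ :=
    integral_nonneg fun ω => by positivity
  have hF : ∀ (N : ℕ) ω, ∑ k ∈ Finset.range N, g k ω = ((min (K ω) N : ℕ) : ℝ) := by
    intro N ω
    have hfil : (Finset.range N).filter (fun k => k < K ω)
        = Finset.range (min (K ω) N) := by
      ext k
      simp only [Finset.mem_filter, Finset.mem_range, lt_min_iff]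
      omega
    calc ∑ k ∈ Finset.range N, g k ω
        = ∑ k ∈ Finset.range N, if k < K ω then (1 : ℝ) else 0 :=
          Finset.sum_congr rfl fun k _ => hg_eq k ω
      _ = ∑ _k ∈ (Finset.range N).filter (fun k => k < K ω), (1 : ℝ) :=
          (Finset.sum_filter _ _).symm
      _ = ((min (K ω) N : ℕ) : ℝ) := by
          rw [hfil, Finset.sum_const, Finset.card_range, nsmul_eq_mul, mul_one]
  have htend : Filter.Tendsto (fun N => ∫ ω, ∑ k ∈ Finset.range N, g k ω ∂μ)
      Filter.atTop (nhds (∫ ω, (K ω : ℝ) ∂μ)) := by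
    refine tendsto_integral_of_dominated_convergence (fun ω => (K ω : ℝ))
      (fun N => (Finset.measurable_sum _ fun k _ => hgm k).aestronglyMeasurable)
      hKint (fun N => Filter.Eventually.of_forall fun ω => ?_)
      (Filter.Eventually.of_forall fun ω => ?_)
    · rw [hF N ω, Real.norm_eq_abs, abs_of_nonneg (by positivity)]
      exact_mod_cast Nat.cast_le.mpr (min_le_left _ _)
    · have hev : (fun N => ∑ k ∈ Finset.range N, g k ω)
          =ᶠ[Filter.atTop] fun _ => (K ω : ℝ) := by
        filter_upwards [Filter.eventually_ge_atTop (K ω)] with N hN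
        rw [hF N ω, min_eq_left hN]
      exact Filter.Tendsto.congr' hev.symm tendsto_const_nhds
  have hEK : (1 - δ) * ∫ ω, (K ω : ℝ) ∂μ ≤ B := by
    refine le_of_tendsto (htend.const_mul (1 - δ))
      (Filter.Eventually.of_forall fun N => ?_)
    have : ∫ ω, ∑ k ∈ Finset.range N, g k ω ∂μ
        = ∑ k ∈ Finset.range N, (μ {ω | k < K ω}).toReal := by
      rw [integral_finset_sum _ (fun k _ => hint_g k)]
      exact Finset.sum_congr rfl fun k _ => hIg k
    rw [this]
    exact hpartial N
  -- Chernoff part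
  have hlog : Real.log (1 - γ) < 0 := Real.log_neg (by linarith) (by linarith)
  set t : ℝ := -Real.log (1 - γ) with ht_def
  have hexp_t : Real.exp (-t) = 1 - γ := by
    rw [ht_def, neg_neg, Real.exp_log (by linarith)]
  have ht0 : 0 < t := by
    rw [ht_def]; linarith
  have ht_le : t * (1 - γ) ≤ γ := by
    have h1 : Real.log (1 - γ)⁻¹ ≤ (1 - γ)⁻¹ - 1 :=
      Real.log_le_sub_one_of_pos (inv_pos.mpr (by linarith))
    rw [Real.log_inv] at h1
    have h2 : t ≤ (1 - γ)⁻¹ - 1 := by rw [ht_def]; linarith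
    have h3 : (0:ℝ) < 1 - γ := by linarith
    calc t * (1 - γ) ≤ ((1 - γ)⁻¹ - 1) * (1 - γ) := by nlinarith
      _ = γ := by field_simp; ring
  set n : ℕ := ⌈((2 + γ * (1 - γ ^ 2)) / ((1 - γ) * (1 - δ))) * B⌉₊ with hn_def
  have hmono_ev : μ {ω | (K ω : ℝ) ≥ ((2 + γ * (1 - γ ^ 2)) / ((1 - γ) * (1 - δ))) * B}
      ≤ μ {ω | (-B : ℝ) ≤ -S n ω} := by
    refine measure_mono_ae ?_
    filter_upwards [hSK] with ω hω hA
    have hn_le : n ≤ K ω := Nat.ceil_le.mpr hA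
    have := hSmono n (K ω) hn_le ω
    show (-B : ℝ) ≤ -S n ω
    linarith
  have hint_exp : Integrable (fun ω => Real.exp (t * -S n ω)) μ := by
    refine hbdd _ 1 ((((hSm n).neg).const_mul t).exp) fun ω => ?_
    rw [abs_of_nonneg (Real.exp_nonneg _)]
    rw [show (1:ℝ) = Real.exp 0 from (Real.exp_zero).symm]
    apply Real.exp_le_exp.mpr
    have := hS0 n ω
    nlinarith
  have hcher : (μ {ω | (-B : ℝ) ≤ -S n ω}).toReal
      ≤ Real.exp (-t * -B) * mgf (fun ω => -S n ω) μ t :=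
    measure_ge_le_exp_mul_mgf (-B) ht0.le hint_exp
  have hmgf_fac : ∀ k, mgf (T k) μ (-t) ≤ Real.exp (-((1 - δ) * γ)) := by
    intro k
    have hpt : (fun ω => Real.exp (-t * T k ω)) = fun ω => 1 + -γ * T k ω := by
      funext ω
      rcases hBer' k ω with h | h
      · rw [h]; simp
      · rw [h, mul_one, mul_one, hexp_t]; ring
    have hmgf_eq : mgf (T k) μ (-t) = 1 + -γ * ∫ ω, T k ω ∂μ := by
      rw [mgf, show (fun ω => Real.exp (-t * T k ω)) = fun ω => 1 + -γ * T k ω from hpt,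
        integral_add (integrable_const 1) ((hint_T k).const_mul (-γ)),
        integral_const, integral_const_mul]
      simp
    rw [hmgf_eq]
    have h1 : 1 + -γ * ∫ ω, T k ω ∂μ ≤ 1 + -((1 - δ) * γ) := by
      nlinarith [hIT k]
    have h2 : -((1 - δ) * γ) + 1 ≤ Real.exp (-((1 - δ) * γ)) := Real.add_one_le_exp _
    linarith
  have hmgf : mgf (fun ω => -S n ω) μ t ≤ Real.exp (-(n * ((1 - δ) * γ))) := by
    have h1 : (fun ω => -S n ω) = -(S n) := rfl
    rw [h1, mgf_neg, hSfun n, iIndepFun.mgf_sum hindep hmeas (Finset.range n)]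
    calc ∏ k ∈ Finset.range n, mgf (T k) μ (-t)
        ≤ ∏ _k ∈ Finset.range n, Real.exp (-((1 - δ) * γ)) :=
          Finset.prod_le_prod (fun k _ => mgf_nonneg) (fun k _ => hmgf_fac k)
      _ = Real.exp (-((1 - δ) * γ)) ^ n := by rw [Finset.prod_const, Finset.card_range]
      _ = Real.exp (-(n * ((1 - δ) * γ))) := by
          rw [← Real.exp_nat_mul]; ring_nf
  have hn_ge : ((2 + γ * (1 - γ ^ 2)) / ((1 - γ) * (1 - δ))) * B ≤ (n : ℝ) := Nat.le_ceil _
  calc (μ {ω | (K ω : ℝ) ≥ ((2 + γ * (1 - γ ^ 2)) / ((1 - γ) * (1 - δ))) * B}).toReal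
      ≤ (μ {ω | (-B : ℝ) ≤ -S n ω}).toReal :=
        ENNReal.toReal_mono (measure_ne_top _ _) hmono_ev
    _ ≤ Real.exp (-t * -B) * mgf (fun ω => -S n ω) μ t := hcher
    _ ≤ Real.exp (-t * -B) * Real.exp (-(n * ((1 - δ) * γ))) := by
        exact mul_le_mul_of_nonneg_left hmgf (Real.exp_nonneg _)
    _ = Real.exp (t * B - n * ((1 - δ) * γ)) := by
        rw [← Real.exp_add]; ring_nf
    _ ≤ Real.exp (-γ ^ 2 * ∫ ω', (K ω' : ℝ) ∂μ) := by
        apply Real.exp_le_exp.mpr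
        have hδ1 : 1 - δ ≤ 1 := by
          refine le_trans (hp 0) ?_
          have h1 : μ {ω | T 0 ω = 1} ≤ 1 := prob_le_one
          have h2 : (μ {ω | T 0 ω = 1}).toReal ≤ (1 : ENNReal).toReal :=
            ENNReal.toReal_mono (by norm_num) h1
          simpa using h2
        have hD : (0 : ℝ) < (1 - γ) * (1 - δ) := by nlinarith
        have hn' : (2 + γ * (1 - γ ^ 2)) * B ≤ (n : ℝ) * ((1 - γ) * (1 - δ)) := by
          rw [div_mul_eq_mul_div, div_le_iff₀ hD] at hn_ge
          linarith
        have h3 : (0 : ℝ) < 1 - γ := by linarith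
        have h1 : t * (1 - γ) * B ≤ γ * B := mul_le_mul_of_nonneg_right ht_le hB
        have h2 : (2 + γ * (1 - γ ^ 2)) * B * γ ≤ (n : ℝ) * ((1 - γ) * (1 - δ)) * γ :=
          mul_le_mul_of_nonneg_right hn' hγ0.le
        have hE2 : ∫ ω', (K ω' : ℝ) ∂μ ≤ 2 * B := by nlinarith [hEK, hEK0, hδ, mul_nonneg (by linarith : (0:ℝ) ≤ 1 - δ - 1/2) hEK0]
        have h4 : γ ^ 2 * (1 - γ) * ∫ ω', (K ω' : ℝ) ∂μ ≤ γ ^ 2 * (1 - γ) * (2 * B) :=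
          mul_le_mul_of_nonneg_left hE2 (by positivity)
        have h5 : 0 ≤ γ * B * (1 - γ + 2 * γ ^ 2 - γ ^ 3) := by
          have hin : (0:ℝ) ≤ 1 - γ + 2 * γ ^ 2 - γ ^ 3 := by
            have := mul_nonneg (sq_nonneg γ) (by linarith : (0:ℝ) ≤ 2 - γ)
            nlinarith
          exact mul_nonneg (mul_nonneg hγ0.le hB) hin
        nlinarith [h1, h2, h4, h5, h3]
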